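/- Let K ≥ N ≥ 1 be natural numbers and let u : Fin N → Fin K be strictly increasing. Then the CP rank of the basis antisymmetric tensor E_u (an N-th order tensor of dimension K) equals the CP rank of the determinant tensor E (an N-th order tensor of dimension N). -/
import Mathlib


open scoped BigOperators

/-- The CP (canonical polyadic) rank of an `N`-th order tensor of dimension `K` over `ℂ`:
the least `p` such that the tensor is a sum of `p` elementary tensor products. -/
noncomputable def cpRank {N K : ℕ} (X : (Fin N → Fin K) → ℂ) : ℕ :=
  sInf {p : ℕ | ∃ x : Fin p → Fin N → Fin K → ℂ,
    ∀ k : Fin N → Fin K, X k = ∑ i, ∏ j, x i j (k j)}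

/-- An `N`-th order tensor is antisymmetric if it changes sign under any permutation
of its indices according to the sign of the permutation. -/
def IsAntisymTensor {N K : ℕ} (X : (Fin N → Fin K) → ℂ) : Prop :=
  ∀ (π : Equiv.Perm (Fin N)) (k : Fin N → Fin K),
    X (k ∘ π) = ((Equiv.Perm.sign π : ℤ) : ℂ) * X k

/-- The determinant tensor: `E ℓ = sgn ℓ` if `ℓ` is a permutation of `Fin N`, `0` otherwise. -/
noncomputable def detTensor (N : ℕ) : (Fin N → Fin N) → ℂ :=
  fun ℓ => ∑ π : Equiv.Perm (Fin N),
    if ℓ = ⇑π then ((Equiv.Perm.sign π : ℤ) : ℂ) else 0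

/-- The basis antisymmetric tensor associated with `u : Fin N → Fin K`:
`E_u ℓ = sgn π` if `ℓ = u ∘ π` for a (necessarily unique, when `u` is injective)
permutation `π` of `Fin N`, and `0` otherwise. -/
noncomputable def basisTensor {N K : ℕ} (u : Fin N → Fin K) : (Fin N → Fin K) → ℂ :=
  fun ℓ => ∑ π : Equiv.Perm (Fin N),
    if ℓ = u ∘ ⇑π then ((Equiv.Perm.sign π : ℤ) : ℂ) else 0

/-- A function on `N`-tuples is antisymmetric if it changes sign under any permutation
of its arguments according to the sign of the permutation. -/
def IsAntisymFun {N : ℕ} {Ω : Type*} (f : (Fin N → Ω) → ℂ) : Prop :=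
  ∀ (π : Equiv.Perm (Fin N)) (r : Fin N → Ω),
    f (r ∘ π) = ((Equiv.Perm.sign π : ℤ) : ℂ) * f r

theorem cpRank_basisTensor_eq_cpRank_detTensor {N K : ℕ} (hN : 1 ≤ N) (hKN : N ≤ K)
    (u : Fin N → Fin K) (hu : StrictMono u) :
    cpRank (basisTensor u) = cpRank (detTensor N) := by
  have hinj := hu.injective
  have hA : ∀ k : Fin N → Fin N, basisTensor u (u ∘ k) = detTensor N k := by
    intro k
    unfold basisTensor detTensor
    refine Finset.sum_congr rfl fun π _ => ?_
    have hiff : u ∘ k = u ∘ ⇑π ↔ k = ⇑π :=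
      ⟨fun h => funext fun j => hinj (congrFun h j), fun h => by rw [h]⟩
    simp [hiff]
  have hB : ∀ k : Fin N → Fin K, (∃ j, ∀ m, k j ≠ u m) → basisTensor u k = 0 := by
    rintro k ⟨j, hj⟩
    unfold basisTensor
    refine Finset.sum_eq_zero fun π _ => ?_
    rw [if_neg]
    intro h
    exact hj (π j) (congrFun h j)
  unfold cpRank
  congr 1
  ext p
  simp only [Set.mem_setOf_eq]
  constructor
  · rintro ⟨x, hx⟩
    refine ⟨fun i j m => x i j (u m), fun k => ?_⟩
    have h := hx (u ∘ k)
    rw [hA k] at h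
    exact h
  · rintro ⟨x, hx⟩
    refine ⟨fun i j c => ∑ m, if c = u m then x i j m else 0, fun k => ?_⟩
    by_cases hk : ∀ j, ∃ m, k j = u m
    · choose m hm using hk
      have hk' : k = u ∘ m := funext hm
      rw [hk', hA m, hx m]
      refine Finset.sum_congr rfl fun i _ => Finset.prod_congr rfl fun j _ => ?_
      show x i j (m j) = ∑ m', if u (m j) = u m' then x i j m' else 0
      simp [hinj.eq_iff]
    · push_neg at hk
      obtain ⟨j, hj⟩ := hk
      rw [hB k ⟨j, hj⟩]
      symm
      refine Finset.sum_eq_zero fun i _ => ?_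
      refine Finset.prod_eq_zero (Finset.mem_univ j) ?_
      exact Finset.sum_eq_zero fun m _ => if_neg (hj m)
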